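/- arXiv:1202.2183 — 2 statements merged into one kernel-verified Lean document; each statement's English description precedes it below -/
import Mathlib

section
/- Let ω be a majorant, M > 0, and let f be a harmonic mapping in the unit disk D such that Λ_f(z) ≤ M ω(1/d(z)) for all z ∈ D. Then for every z ∈ D and every r ∈ (0, 1−|z|], (1/|D(z,r)|) ∫_{D(z,r)} |f(ζ) − f(z)| dA(ζ) ≤ 2 M r ω(1/r). -/
open Complex MeasureTheory Metric Set Real
open scoped ENNReal

/-- The Wirtinger derivative `f_z = (f_x - i f_y)/2` of `f` at `z`
(real Fréchet derivative applied to the directions `1` and `i`). -/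
noncomputable def wirtingerZ (f : ℂ → ℂ) (z : ℂ) : ℂ :=
  (fderiv ℝ f z 1 - Complex.I * fderiv ℝ f z Complex.I) / 2

/-- The Wirtinger derivative `f_z̄ = (f_x + i f_y)/2` of `f` at `z`. -/
noncomputable def wirtingerZbar (f : ℂ → ℂ) (z : ℂ) : ℂ :=
  (fderiv ℝ f z 1 + Complex.I * fderiv ℝ f z Complex.I) / 2

/-- `Λ_f(z) = |f_z(z)| + |f_z̄(z)|`. -/
noncomputable def Lam (f : ℂ → ℂ) (z : ℂ) : ℝ :=
  ‖wirtingerZ f z‖ + ‖wirtingerZbar f z‖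

/-- A complex-valued function is harmonic on a set: it is `C²` there and its
Laplacian `f_xx + f_yy` vanishes (equivalently, its real and imaginary parts are
real harmonic). -/
def IsHarmonicOn (f : ℂ → ℂ) (s : Set ℂ) : Prop :=
  ContDiffOn ℝ 2 f s ∧ ∀ z ∈ s,
    fderiv ℝ (fun w => fderiv ℝ f w 1) z 1
      + fderiv ℝ (fun w => fderiv ℝ f w Complex.I) z Complex.I = 0

/-- A majorant: a continuous increasing function `ω : [0,∞) → [0,∞)` with
`ω 0 = 0` such that `ω t / t` is non-increasing for `t > 0`. -/
def IsMajorant (ω : ℝ → ℝ) : Prop :=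
  ContinuousOn ω (Ici 0) ∧ MonotoneOn ω (Ici 0) ∧ ω 0 = 0 ∧
    ∀ s t : ℝ, 0 < s → s ≤ t → ω t / t ≤ ω s / s



section Aux
open intervalIntegral

lemma majorant_nonneg {ω : ℝ → ℝ} (hω : IsMajorant ω) {x : ℝ} (hx : 0 ≤ x) : 0 ≤ ω x := by
  rw [← hω.2.2.1]
  exact hω.2.1 (show (0:ℝ) ∈ Ici 0 by simp) (show x ∈ Ici 0 from hx) hx

lemma clm_decomp (L : ℂ →L[ℝ] ℂ) (v : ℂ) :
    L v = ((L 1 - Complex.I * L Complex.I)/2) * v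
        + ((L 1 + Complex.I * L Complex.I)/2) * (starRingEnd ℂ v) := by
  have hv : v = (v.re : ℝ) • (1:ℂ) + (v.im : ℝ) • Complex.I := by
    simp [Complex.real_smul, Complex.re_add_im]
  have h2 : L v = (v.re : ℂ) * L 1 + (v.im : ℂ) * L Complex.I := by
    conv_lhs => rw [hv]
    rw [map_add, L.map_smul, L.map_smul]
    simp [Complex.real_smul]
  set x : ℂ := (v.re : ℂ) with hx
  set y : ℂ := (v.im : ℂ) with hy
  have hc : (starRingEnd ℂ) v = x - y * Complex.I := by
    simp [hx, hy, Complex.ext_iff]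
  have hv' : v = x + y * Complex.I := by simp [hx, hy, Complex.ext_iff]
  rw [h2, hc, hv']
  linear_combination ((L Complex.I) * y) * Complex.I_sq

lemma fderiv_norm_le (f : ℂ → ℂ) (w v : ℂ) :
    ‖fderiv ℝ f w v‖ ≤ Lam f w * ‖v‖ := by
  rw [show (fderiv ℝ f w) v = _ from clm_decomp (fderiv ℝ f w) v]
  refine le_trans (norm_add_le _ _) ?_
  rw [norm_mul, norm_mul, RCLike.norm_conj, Lam, wirtingerZ, wirtingerZbar, add_mul]

lemma tint (r s : ℝ) (hs : 0 ≤ s) (hsr : s < r) :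
    ∫ t in (0:ℝ)..1, s * (r - t * s) ^ (-(4/5) : ℝ)
      = 5 * (r ^ ((1/5):ℝ) - (r - s) ^ ((1/5):ℝ)) := by
  have hpos : ∀ t ∈ Set.uIcc (0:ℝ) 1, 0 < r - t * s := by
    intro t ht
    rw [Set.uIcc_of_le (by norm_num)] at ht
    nlinarith [ht.1, ht.2]
  have hderiv : ∀ t ∈ Set.uIcc (0:ℝ) 1,
      HasDerivAt (fun t => -5 * (r - t * s) ^ ((1/5):ℝ))
        (s * (r - t * s) ^ (-(4/5) : ℝ)) t := by
    intro t ht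
    have hin : HasDerivAt (fun t : ℝ => r - t * s) (-s) t := by
      simpa using ((hasDerivAt_id t).mul_const s).const_sub r
    have hout := (Real.hasDerivAt_rpow_const
      (x := r - t * s) (p := (1/5:ℝ)) (Or.inl (hpos t ht).ne')).comp t hin
    have := hout.const_mul (-5 : ℝ)
    refine this.congr_deriv ?_
    rw [show ((1:ℝ)/5 - 1) = -(4/5) by norm_num]
    ring
  rw [integral_eq_sub_of_hasDerivAt hderiv ?hint]
  · ring_nf
  case hint =>
    apply ContinuousOn.intervalIntegrable
    apply ContinuousOn.mul continuousOn_const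
    intro t ht
    apply ContinuousAt.continuousWithinAt
    apply ContinuousAt.rpow_const
    · fun_prop
    · exact Or.inl (hpos t ht).ne'

lemma pointwise_bound (ω : ℝ → ℝ) (hω : IsMajorant ω) (M : ℝ) (hM : 0 < M)
    (f : ℂ → ℂ) (hf : ContDiffOn ℝ 2 f (ball (0:ℂ) 1))
    (hΛ : ∀ z ∈ ball (0 : ℂ) 1, Lam f z ≤ M * ω (1 / (1 - ‖z‖)))
    (z : ℂ) (r : ℝ) (hr : 0 < r) (hr2 : r ≤ 1 - ‖z‖)
    (ζ : ℂ) (hζ : ζ ∈ ball z r) :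
    ‖f ζ - f z‖ ≤ 5 * (M * r * ω (1/r)) *
      (r ^ ((1/5):ℝ) * (r - ‖ζ - z‖) ^ (-(1/5) : ℝ) - 1) := by
  set s : ℝ := ‖ζ - z‖ with hs_def
  have hs0 : 0 ≤ s := norm_nonneg _
  have hsr : s < r := by rwa [mem_ball, dist_eq_norm] at hζ
  have hrs : 0 < r - s := by linarith
  set γ : ℝ → ℂ := fun t => z + t • (ζ - z) with hγ
  have hkey : ∀ t ∈ Set.Icc (0:ℝ) 1, r - t * s ≤ 1 - ‖γ t‖ ∧ 0 < r - t * s := by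
    intro t ht
    have h1 : ‖γ t‖ ≤ ‖z‖ + t * s := by
      calc ‖γ t‖ ≤ ‖z‖ + ‖t • (ζ - z)‖ := norm_add_le _ _
        _ = ‖z‖ + |t| * s := by rw [norm_smul, Real.norm_eq_abs]
        _ = ‖z‖ + t * s := by rw [_root_.abs_of_nonneg ht.1]
    constructor
    · nlinarith [ht.1, ht.2]
    · nlinarith [ht.1, ht.2]
  have hmem : ∀ t ∈ Set.Icc (0:ℝ) 1, γ t ∈ ball (0:ℂ) 1 := by
    intro t ht
    have := hkey t ht
    rw [mem_ball, dist_zero_right]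
    nlinarith [this.1, this.2, mul_nonneg ht.1 hs0]
  -- derivative of f ∘ γ
  have hderiv : ∀ t ∈ Set.uIcc (0:ℝ) 1,
      HasDerivAt (fun u => f (γ u)) ((fderiv ℝ f (γ t)) (ζ - z)) t := by
    intro t ht
    rw [Set.uIcc_of_le (by norm_num)] at ht
    have hdf : DifferentiableAt ℝ f (γ t) := by
      have := (hf.differentiableOn (by norm_num)).differentiableAt
        (isOpen_ball.mem_nhds (hmem t ht))
      exact this
    have hg : HasDerivAt γ (ζ - z) t := by
      have := ((hasDerivAt_id t).smul_const (ζ - z)).const_add z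
      rw [one_smul] at this
      exact this
    exact hdf.hasFDerivAt.comp_hasDerivAt t hg
  -- continuity of the derivative
  have hγcont : Continuous γ := by fun_prop
  have hcont : ContinuousOn (fun t => (fderiv ℝ f (γ t)) (ζ - z)) (Set.Icc (0:ℝ) 1) := by
    have hfd : ContinuousOn (fderiv ℝ f) (ball (0:ℂ) 1) :=
      hf.continuousOn_fderiv_of_isOpen isOpen_ball (by norm_num)
    exact ((hfd.comp hγcont.continuousOn hmem).clm_apply continuousOn_const)
  have hint : IntervalIntegrable (fun t => (fderiv ℝ f (γ t)) (ζ - z)) volume 0 1 := by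
    apply ContinuousOn.intervalIntegrable
    rwa [Set.uIcc_of_le (by norm_num : (0:ℝ) ≤ 1)]
  have hftc : f ζ - f z = ∫ t in (0:ℝ)..1, (fderiv ℝ f (γ t)) (ζ - z) := by
    have := integral_eq_sub_of_hasDerivAt hderiv hint
    rw [this]
    simp [hγ]
  -- the bounding function
  set C : ℝ := M * r * ω (1/r) with hC
  have hω0 : 0 ≤ ω (1/r) := majorant_nonneg hω (by positivity)
  have hC0 : 0 ≤ C := by positivity
  set φ : ℝ → ℝ := fun t => C * (r - s) ^ (-(1/5) : ℝ) * (s * (r - t * s) ^ (-(4/5) : ℝ)) with hφ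
  have hφcont : ContinuousOn φ (Set.uIcc (0:ℝ) 1) := by
    apply ContinuousOn.mul continuousOn_const
    apply ContinuousOn.mul continuousOn_const
    intro t ht
    rw [Set.uIcc_of_le (by norm_num)] at ht
    apply ContinuousAt.continuousWithinAt
    apply ContinuousAt.rpow_const
    · fun_prop
    · exact Or.inl (hkey t ht).2.ne'
  have hφint : IntervalIntegrable φ volume 0 1 := hφcont.intervalIntegrable
  -- pointwise bound of the derivative
  have hbd : ∀ t ∈ Set.Icc (0:ℝ) 1, ‖(fderiv ℝ f (γ t)) (ζ - z)‖ ≤ φ t := by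
    intro t ht
    obtain ⟨hk1, hk2⟩ := hkey t ht
    have hd1 : (0:ℝ) < 1 - ‖γ t‖ := lt_of_lt_of_le hk2 hk1
    have step1 : ‖(fderiv ℝ f (γ t)) (ζ - z)‖ ≤ Lam f (γ t) * s := fderiv_norm_le f (γ t) (ζ - z)
    have step2 : Lam f (γ t) ≤ M * ω (1 / (1 - ‖γ t‖)) := hΛ _ (hmem t ht)
    have mono := hω.2.1 (show 1 / (1 - ‖γ t‖) ∈ Ici (0:ℝ) by simp only [mem_Ici]; positivity)
      (show 1 / (r - t * s) ∈ Ici (0:ℝ) by simp only [mem_Ici]; positivity)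
      (by apply one_div_le_one_div_of_le hk2 hk1)
    have maj := hω.2.2.2 (1/r) (1/(r - t*s)) (by positivity)
      (by apply one_div_le_one_div_of_le hk2 (by nlinarith [ht.1, mul_nonneg ht.1 hs0]))
    -- ω(1/(r-ts)) ≤ (1/(r-ts)) * r * ω(1/r)
    have hT : (0:ℝ) < 1/(r - t*s) := by positivity
    have maj' : ω (1/(r - t*s)) ≤ (1/(r - t*s)) * r * ω (1/r) := by
      rw [div_le_div_iff₀ hT (by positivity)] at maj
      calc ω (1/(r - t*s)) = ω (1/(r-t*s)) * (1/r) * r := by field_simp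
        _ ≤ (1/(r-t*s)) * ω (1/r) * r := by
            apply mul_le_mul_of_nonneg_right _ hr.le
            linarith [maj]
        _ = (1/(r - t*s)) * r * ω (1/r) := by ring
    have hsplit : (r - t*s)⁻¹ ≤ (r - t*s) ^ (-(4/5) : ℝ) * (r - s) ^ (-(1/5) : ℝ) := by
      have h1 : (r - t*s)⁻¹ = (r - t*s) ^ (-(4/5) : ℝ) * (r - t*s) ^ (-(1/5) : ℝ) := by
        rw [← Real.rpow_add hk2]
        norm_num [Real.rpow_neg_one]
      rw [h1]
      apply mul_le_mul_of_nonneg_left _ (Real.rpow_nonneg hk2.le _)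
      apply Real.rpow_le_rpow_of_nonpos hrs (by nlinarith [ht.2, mul_nonneg ht.1 hs0]) (by norm_num)
    calc ‖(fderiv ℝ f (γ t)) (ζ - z)‖ ≤ Lam f (γ t) * s := step1
      _ ≤ (M * ω (1 / (1 - ‖γ t‖))) * s := by
          apply mul_le_mul_of_nonneg_right step2 hs0
      _ ≤ (M * ω (1 / (r - t*s))) * s := by
          apply mul_le_mul_of_nonneg_right _ hs0
          exact mul_le_mul_of_nonneg_left mono hM.le
      _ ≤ (M * ((1/(r - t*s)) * r * ω (1/r))) * s := by
          apply mul_le_mul_of_nonneg_right _ hs0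
          exact mul_le_mul_of_nonneg_left maj' hM.le
      _ = C * s * (r - t*s)⁻¹ := by rw [hC]; ring
      _ ≤ C * s * ((r - t*s) ^ (-(4/5) : ℝ) * (r - s) ^ (-(1/5) : ℝ)) := by
          apply mul_le_mul_of_nonneg_left hsplit (by positivity)
      _ = φ t := by rw [hφ]; ring
  -- assemble
  have hnorm : ‖f ζ - f z‖ ≤ |∫ t in (0:ℝ)..1, φ t| := by
    rw [hftc]
    refine le_trans (intervalIntegral.norm_integral_le_of_norm_le (by norm_num)
      (Filter.Eventually.of_forall ?_) hφint) (le_abs_self _)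
    intro t ht
    apply hbd t
    exact ⟨ht.1.le, ht.2⟩
  have hval : ∫ t in (0:ℝ)..1, φ t
      = C * (r - s) ^ (-(1/5) : ℝ) * (5 * (r ^ ((1/5):ℝ) - (r - s) ^ ((1/5):ℝ))) := by
    rw [hφ]
    rw [intervalIntegral.integral_const_mul]
    rw [tint r s hs0 hsr]
  have hfinal : C * (r - s) ^ (-(1/5) : ℝ) * (5 * (r ^ ((1/5):ℝ) - (r - s) ^ ((1/5):ℝ)))
      = 5 * C * (r ^ ((1/5):ℝ) * (r - s) ^ (-(1/5) : ℝ) - 1) := by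
    have hh : (r - s) ^ (-(1/5) : ℝ) * (r - s) ^ ((1/5):ℝ) = 1 := by
      rw [← Real.rpow_add hrs]; norm_num
    rw [show C * (r - s) ^ (-(1/5) : ℝ) * (5 * (r ^ ((1/5):ℝ) - (r - s) ^ ((1/5):ℝ)))
      = 5 * C * (r ^ ((1/5):ℝ) * (r - s) ^ (-(1/5) : ℝ))
        - 5 * C * ((r - s) ^ (-(1/5) : ℝ) * (r - s) ^ ((1/5):ℝ)) by ring, hh]
    ring
  have h1 : (1:ℝ) ≤ r ^ ((1/5):ℝ) * (r - s) ^ (-(1/5) : ℝ) := by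
    have e1 : r ^ ((1/5):ℝ) * r ^ (-(1/5):ℝ) = 1 := by
      rw [← Real.rpow_add hr]; norm_num
    have e2 : r ^ (-(1/5):ℝ) ≤ (r-s) ^ (-(1/5):ℝ) :=
      Real.rpow_le_rpow_of_nonpos hrs (by linarith) (by norm_num)
    calc (1:ℝ) = r ^ ((1/5):ℝ) * r ^ (-(1/5):ℝ) := e1.symm
      _ ≤ r ^ ((1/5):ℝ) * (r-s) ^ (-(1/5):ℝ) :=
          mul_le_mul_of_nonneg_left e2 (Real.rpow_nonneg hr.le _)
  have habs : |∫ t in (0:ℝ)..1, φ t| = ∫ t in (0:ℝ)..1, φ t := by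
    rw [_root_.abs_of_nonneg]
    rw [hval, hfinal]
    nlinarith [hC0, h1]
  rw [habs, hval, hfinal] at hnorm
  exact hnorm

lemma oneD_integrable (r : ℝ) (hr : 0 < r) :
    IntervalIntegrable (fun y => y * (r - y) ^ (-(1/5):ℝ)) volume 0 r := by
  have h1 : IntervalIntegrable (fun x : ℝ => x ^ (-(1/5):ℝ)) volume 0 r :=
    intervalIntegrable_rpow' (by norm_num)
  have h2 := h1.comp_sub_left r
  simp only [sub_zero, sub_self] at h2
  have h3 := h2.continuousOn_mul continuousOn_id
  simpa using h3.symm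

lemma oneD_value (r : ℝ) (hr : 0 < r) :
    ∫ y in (0:ℝ)..r, y * (r - y) ^ (-(1/5):ℝ) = 25/36 * r ^ ((9/5):ℝ) := by
  set G : ℝ → ℝ := fun y => -(5*r/4) * (r - y) ^ ((4/5):ℝ) + (5/9) * (r - y) ^ ((9/5):ℝ) with hG
  have hcont : ContinuousOn G (Icc 0 r) := by
    apply ContinuousOn.add
    · apply ContinuousOn.mul continuousOn_const
      intro y _
      exact (ContinuousAt.rpow_const (by fun_prop) (Or.inr (by norm_num))).continuousWithinAt
    · apply ContinuousOn.mul continuousOn_const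
      intro y _
      exact (ContinuousAt.rpow_const (by fun_prop) (Or.inr (by norm_num))).continuousWithinAt
  have hderiv : ∀ y ∈ Ioo (0:ℝ) r, HasDerivWithinAt G (y * (r - y) ^ (-(1/5):ℝ)) (Ioi y) y := by
    intro y hy
    have hpos : 0 < r - y := by linarith [hy.2]
    have hin : HasDerivAt (fun y : ℝ => r - y) (-1) y := by
      simpa using (hasDerivAt_id y).const_sub r
    have d1 := ((Real.hasDerivAt_rpow_const (x := r - y) (p := (4/5:ℝ))
      (Or.inl hpos.ne')).comp y hin).const_mul (-(5*r/4))
    have d2 := ((Real.hasDerivAt_rpow_const (x := r - y) (p := (9/5:ℝ))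
      (Or.inl hpos.ne')).comp y hin).const_mul ((5:ℝ)/9)
    have := (d1.add d2)
    apply HasDerivAt.hasDerivWithinAt
    refine this.congr_deriv ?_
    have e1 : (r - y) ^ ((4/5:ℝ) - 1) = (r - y) ^ (-(1/5):ℝ) := by norm_num
    have e2 : (r - y) ^ ((9/5:ℝ) - 1) = (r - y) ^ ((4/5):ℝ) := by norm_num
    rw [e1, e2]
    have e3 : (r - y) ^ ((4/5):ℝ) = (r - y) * (r - y) ^ (-(1/5):ℝ) := by
      rw [← Real.rpow_one_add' hpos.le (by norm_num)]
      norm_num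
    rw [e3]; ring
  have hint := oneD_integrable r hr
  rw [integral_eq_sub_of_hasDeriv_right_of_le hr.le hcont hderiv hint]
  have hz1 : ((0:ℝ)) ^ ((4/5):ℝ) = 0 := Real.zero_rpow (by norm_num)
  have hz2 : ((0:ℝ)) ^ ((9/5):ℝ) = 0 := Real.zero_rpow (by norm_num)
  have hG0 : G r = 0 := by simp [hG, hz1, hz2]
  have e4 : r * r ^ ((4/5):ℝ) = r ^ ((9/5):ℝ) := by
    rw [← Real.rpow_one_add' hr.le (by norm_num)]
    norm_num
  have hGr : G 0 = -(5*r/4) * r ^ ((4/5):ℝ) + (5/9) * r ^ ((9/5):ℝ) := by simp [hG]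
  rw [hG0, hGr]
  rw [show -(5*r/4) * r ^ ((4/5):ℝ) = -(5/4) * (r * r ^ ((4/5):ℝ)) by ring, e4]
  ring

noncomputable def Hfun (r : ℝ) : ℝ → ℝ := fun y => if y < r then (r - y) ^ (-(1/5):ℝ) else 0

lemma Hfun_meas (r : ℝ) : Measurable (Hfun r) := by
  unfold Hfun
  apply Measurable.ite measurableSet_Iio _ measurable_const
  have : Measurable fun x : ℝ => r - x := by fun_prop
  measurability

lemma Hfun_nonneg (r : ℝ) (y : ℝ) : 0 ≤ Hfun r y := by
  unfold Hfun
  split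
  · exact Real.rpow_nonneg (by linarith) _
  · exact le_refl 0

-- y * H y equals the indicator of Ioc 0 r on Ioi 0

lemma yH_eq (r : ℝ) (hr : 0 < r) : ∀ y ∈ Ioi (0:ℝ),
    y * Hfun r y = (Ioc (0:ℝ) r).indicator (fun y => y * (r - y) ^ (-(1/5):ℝ)) y := by
  intro y hy
  simp only [Set.indicator_apply, Set.mem_Ioc, Hfun]
  rcases lt_trichotomy y r with h | h | h
  · rw [if_pos h, if_pos ⟨hy, h.le⟩]
  · subst h
    rw [if_neg (lt_irrefl _), if_pos ⟨hy, le_refl _⟩, sub_self,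
      Real.zero_rpow (by norm_num : (-(1/5):ℝ) ≠ 0)]
  · rw [if_neg (not_lt.2 h.le), if_neg (by rintro ⟨_, h2⟩; exact absurd h2 (not_le.2 h))]
    ring

lemma yH_integrableOn (r : ℝ) (hr : 0 < r) :
    IntegrableOn (fun y => y * Hfun r y) (Ioi (0:ℝ)) volume := by
  have h1 : IntegrableOn (fun y => y * (r - y) ^ (-(1/5):ℝ)) (Ioc (0:ℝ) r) volume := by
    have := (oneD_integrable r hr)
    rwa [intervalIntegrable_iff_integrableOn_Ioc_of_le hr.le] at this
  have h2 : Integrable ((Ioc (0:ℝ) r).indicator (fun y => y * (r - y) ^ (-(1/5):ℝ))) volume :=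
    h1.integrable_indicator measurableSet_Ioc
  exact (h2.integrableOn).congr_fun (fun y hy => (yH_eq r hr y hy).symm) measurableSet_Ioi

lemma yH_value (r : ℝ) (hr : 0 < r) :
    ∫ y in Ioi (0:ℝ), y * Hfun r y = 25/36 * r ^ ((9/5):ℝ) := by
  rw [setIntegral_congr_fun measurableSet_Ioi (yH_eq r hr)]
  rw [setIntegral_indicator measurableSet_Ioc]
  rw [show Ioi (0:ℝ) ∩ Ioc 0 r = Ioc 0 r by
    rw [Set.inter_eq_self_of_subset_right]; exact Ioc_subset_Ioi_self]
  rw [← intervalIntegral.integral_of_le hr.le]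
  exact oneD_value r hr

lemma vol_ball_one : (volume (ball (0:ℂ) 1)).toReal = π := by
  rw [Complex.volume_ball]
  simp [ENNReal.toReal_mul]

lemma radial_formula (r : ℝ) (g : ℝ → ℝ) :
    ∫ x : ℂ, g ‖x‖ = 2 * π * ∫ y in Ioi (0:ℝ), y * g y := by
  have h := MeasureTheory.integral_fun_norm_addHaar (volume : Measure ℂ) g
  rw [Complex.finrank_real_complex] at h
  rw [h, measureReal_def, vol_ball_one]
  rw [nsmul_eq_mul, smul_eq_mul]
  rw [show (2:ℕ) - 1 = 1 from rfl]
  simp_rw [pow_one, smul_eq_mul]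
  ring

lemma twoD_value (r : ℝ) (hr : 0 < r) :
    ∫ x : ℂ, Hfun r ‖x‖ = 2 * π * (25/36 * r ^ ((9/5):ℝ)) := by
  rw [radial_formula r (Hfun r), yH_value r hr]

lemma twoD_integrable (r : ℝ) (hr : 0 < r) :
    Integrable (fun x : ℂ => Hfun r ‖x‖) volume := by
  set V : ℝ := 2 * π * (25/36 * r ^ ((9/5):ℝ)) with hV
  have hmeas : Measurable fun x : ℂ => Hfun r ‖x‖ := (Hfun_meas r).comp measurable_norm
  -- truncations
  have hBn_meas : ∀ n : ℕ, Measurable fun x : ℂ => min (Hfun r ‖x‖) n :=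
    fun n => hmeas.min measurable_const
  have hBn_int : ∀ n : ℕ, Integrable (fun x : ℂ => min (Hfun r ‖x‖) n) volume := by
    intro n
    apply Integrable.mono' (g := (ball (0:ℂ) r).indicator fun _ => (n:ℝ))
    · exact (integrable_indicator_iff measurableSet_ball).2
        (integrableOn_const measure_ball_lt_top.ne)
    · exact (hBn_meas n).aestronglyMeasurable
    · filter_upwards [] with x
      rw [Real.norm_eq_abs, _root_.abs_of_nonneg (le_min (Hfun_nonneg r _) (Nat.cast_nonneg n))]
      by_cases hx : x ∈ ball (0:ℂ) r
      · rw [Set.indicator_of_mem hx]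
        exact min_le_right _ _
      · rw [Set.indicator_of_notMem hx]
        have : ¬ ‖x‖ < r := by rwa [← mem_ball_zero_iff]
        rw [show Hfun r ‖x‖ = 0 from if_neg this]
        simp
  have hBn_le : ∀ n : ℕ, ∫ x : ℂ, min (Hfun r ‖x‖) n ≤ V := by
    intro n
    rw [radial_formula r (fun y => min (Hfun r y) n), hV]
    have hmono : ∫ y in Ioi (0:ℝ), y * min (Hfun r y) n ≤ ∫ y in Ioi (0:ℝ), y * Hfun r y := by
      apply setIntegral_mono_on _ (yH_integrableOn r hr) measurableSet_Ioi
      · intro y hy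
        exact mul_le_mul_of_nonneg_left (min_le_left _ _) (le_of_lt hy)
      · apply Integrable.mono' (yH_integrableOn r hr)
        · exact ((measurable_id.mul ((Hfun_meas r).min measurable_const))).aestronglyMeasurable
        · filter_upwards [ae_restrict_mem measurableSet_Ioi] with y hy
          rw [Real.norm_eq_abs, _root_.abs_of_nonneg
            (mul_nonneg (le_of_lt hy) (le_min (Hfun_nonneg r _) (Nat.cast_nonneg n)))]
          exact mul_le_mul_of_nonneg_left (min_le_left _ _) (le_of_lt hy)
    rw [yH_value r hr] at hmono
    nlinarith [Real.pi_pos, hmono]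
  -- lintegral bound
  have hsup : ∀ a : ℝ, 0 ≤ a → (⨆ n : ℕ, ENNReal.ofReal (min a n)) = ENNReal.ofReal a := by
    intro a ha
    apply le_antisymm
    · exact iSup_le fun n => ENNReal.ofReal_le_ofReal (min_le_left _ _)
    · refine le_trans (le_of_eq ?_) (le_iSup _ ⌈a⌉₊)
      rw [min_eq_left (Nat.le_ceil a)]
  have hlin : ∫⁻ x : ℂ, ENNReal.ofReal (Hfun r ‖x‖) ≤ ENNReal.ofReal V := by
    have heq : ∫⁻ x : ℂ, ENNReal.ofReal (Hfun r ‖x‖)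
        = ⨆ n : ℕ, ∫⁻ x : ℂ, ENNReal.ofReal (min (Hfun r ‖x‖) n) := by
      rw [← lintegral_iSup]
      · apply lintegral_congr
        intro x
        rw [hsup _ (Hfun_nonneg r _)]
      · exact fun n => ENNReal.measurable_ofReal.comp ((hBn_meas n))
      · intro m n hmn x
        exact ENNReal.ofReal_le_ofReal (min_le_min (le_refl _) (Nat.cast_le.2 hmn))
    rw [heq]
    apply iSup_le
    intro n
    rw [← ofReal_integral_eq_lintegral_ofReal (hBn_int n)
      (Filter.Eventually.of_forall fun x => le_min (Hfun_nonneg r _) (Nat.cast_nonneg n))]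
    exact ENNReal.ofReal_le_ofReal (hBn_le n)
  refine ⟨hmeas.aestronglyMeasurable, ?_⟩
  rw [hasFiniteIntegral_iff_norm]
  calc ∫⁻ x : ℂ, ENNReal.ofReal ‖Hfun r ‖x‖‖
      = ∫⁻ x : ℂ, ENNReal.ofReal (Hfun r ‖x‖) := by
        apply lintegral_congr
        intro x
        rw [Real.norm_eq_abs, _root_.abs_of_nonneg (Hfun_nonneg r _)]
    _ ≤ ENNReal.ofReal V := hlin
    _ < ⊤ := ENNReal.ofReal_lt_top

lemma Hfun_indicator (r : ℝ) :
    (fun x : ℂ => Hfun r ‖x‖)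
      = (ball (0:ℂ) r).indicator (fun x => (r - ‖x‖) ^ (-(1/5):ℝ)) := by
  funext x
  by_cases h : x ∈ ball (0:ℂ) r
  · rw [Set.indicator_of_mem h, Hfun, if_pos (mem_ball_zero_iff.1 h)]
  · rw [Set.indicator_of_notMem h, Hfun, if_neg (fun hh => h (mem_ball_zero_iff.2 hh))]

-- translated integrand, as a global indicator function

lemma trans_indicator (r : ℝ) (z : ℂ) :
    (ball z r).indicator (fun ζ : ℂ => (r - ‖ζ - z‖) ^ (-(1/5):ℝ))
      = fun ζ : ℂ => Hfun r ‖ζ - z‖ := by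
  funext ζ
  have hiff : ζ ∈ ball z r ↔ ‖ζ - z‖ < r := by rw [mem_ball, dist_eq_norm]
  by_cases h : ‖ζ - z‖ < r
  · rw [Set.indicator_of_mem (hiff.2 h), Hfun, if_pos h]
  · rw [Set.indicator_of_notMem (fun hh => h (hiff.1 hh)), Hfun, if_neg h]

lemma trans_integrableOn (r : ℝ) (hr : 0 < r) (z : ℂ) :
    IntegrableOn (fun ζ : ℂ => (r - ‖ζ - z‖) ^ (-(1/5):ℝ)) (ball z r) volume := by
  have h1 : Integrable ((ball z r).indicator fun ζ : ℂ => (r - ‖ζ - z‖) ^ (-(1/5):ℝ)) volume := by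
    rw [trans_indicator]
    exact (twoD_integrable r hr).comp_sub_right z
  exact (integrable_indicator_iff measurableSet_ball).1 h1

lemma trans_value (r : ℝ) (hr : 0 < r) (z : ℂ) :
    ∫ ζ in ball z r, (r - ‖ζ - z‖) ^ (-(1/5):ℝ) = 2 * π * (25/36 * r ^ ((9/5):ℝ)) := by
  rw [← MeasureTheory.integral_indicator (measurableSet_ball : MeasurableSet (ball z r)), trans_indicator]
  rw [show (fun ζ : ℂ => Hfun r ‖ζ - z‖) = fun ζ : ℂ => (fun x : ℂ => Hfun r ‖x‖) (ζ - z) from rfl]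
  rw [integral_sub_right_eq_self (fun x : ℂ => Hfun r ‖x‖) z]
  exact twoD_value r hr

end Aux

/-- if `ω` is a majorant, `M > 0`, and `f` is harmonic in the unit
disk with `Λ_f(z) ≤ M ω(1/d(z))` on `𝔻`, then for every `z ∈ 𝔻` and `r ∈ (0, 1-|z|]`,
`(1/(πr²)) ∫_{D(z,r)} |f(ζ) - f(z)| dA(ζ) ≤ 2 M r ω(1/r)`. -/
theorem stmt1 (ω : ℝ → ℝ) (hω : IsMajorant ω) (M : ℝ) (hM : 0 < M) (f : ℂ → ℂ)
    (hf : IsHarmonicOn f (ball (0 : ℂ) 1))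
    (hΛ : ∀ z ∈ ball (0 : ℂ) 1, Lam f z ≤ M * ω (1 / (1 - ‖z‖))) :
    ∀ z ∈ ball (0 : ℂ) 1, ∀ r : ℝ, 0 < r → r ≤ 1 - ‖z‖ →
      (π * r ^ 2)⁻¹ * (∫ ζ in ball z r, ‖f ζ - f z‖) ≤ 2 * M * (r * ω (1 / r)) := by
  intro z hz r hr hr2
  have hπ : 0 < π := Real.pi_pos
  have hπr2 : 0 < π * r ^ 2 := by positivity
  have hω0 : 0 ≤ ω (1/r) := majorant_nonneg hω (by positivity)
  have hsub : ball z r ⊆ ball (0:ℂ) 1 := by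
    intro x hx
    rw [mem_ball, dist_zero_right] at *
    calc ‖x‖ = ‖(x - z) + z‖ := by ring_nf
      _ ≤ ‖x - z‖ + ‖z‖ := norm_add_le _ _
      _ < r + ‖z‖ := by
          rw [dist_eq_norm] at hx
          linarith [hx]
      _ ≤ 1 := by linarith
  set C : ℝ := M * r * ω (1/r) with hC
  have hC0 : 0 ≤ C := by positivity
  set B : ℂ → ℝ := fun ζ => 5 * C * (r ^ ((1/5):ℝ) * (r - ‖ζ - z‖) ^ (-(1/5) : ℝ) - 1) with hB
  have hBsplit : B = fun ζ =>
      (5 * C * r ^ ((1/5):ℝ)) * (r - ‖ζ - z‖) ^ (-(1/5) : ℝ) - 5 * C := by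
    funext ζ; rw [hB]; ring
  have hBint : IntegrableOn B (ball z r) volume := by
    rw [hBsplit]
    exact ((trans_integrableOn r hr z).const_mul _).sub
      (integrableOn_const measure_ball_lt_top.ne)
  have hvol : (volume (ball z r)).toReal = r ^ 2 * π := by
    rw [Complex.volume_ball]
    rw [ENNReal.toReal_mul, ENNReal.toReal_pow, ENNReal.toReal_ofReal hr.le]
    simp [NNReal.coe_real_pi]
  have hr2nat : r ^ ((1/5):ℝ) * r ^ ((9/5):ℝ) = r ^ (2:ℕ) := by
    rw [← Real.rpow_natCast r 2, ← Real.rpow_add hr]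
    norm_num
  have hBval : ∫ ζ in ball z r, B ζ = (35/18) * C * (π * r ^ 2) := by
    rw [hBsplit]
    rw [integral_sub ((trans_integrableOn r hr z).const_mul _)
      (integrableOn_const measure_ball_lt_top.ne)]
    rw [integral_const_mul, trans_value r hr z, setIntegral_const, measureReal_def, hvol, smul_eq_mul]
    linear_combination (125/18 * C * π) * hr2nat
  have hptw : ∀ ζ ∈ ball z r, ‖f ζ - f z‖ ≤ B ζ := by
    intro ζ hζ
    exact pointwise_bound ω hω M hM f hf.1 hΛ z r hr hr2 ζ hζ
  have hfint : IntegrableOn (fun ζ => ‖f ζ - f z‖) (ball z r) volume := by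
    apply Integrable.mono' hBint
    · exact (((hf.1.continuousOn.mono hsub).sub continuousOn_const).norm).aestronglyMeasurable
        measurableSet_ball
    · filter_upwards [ae_restrict_mem measurableSet_ball] with ζ hζ
      rw [norm_norm]
      exact hptw ζ hζ
  have hIle : (∫ ζ in ball z r, ‖f ζ - f z‖) ≤ ∫ ζ in ball z r, B ζ :=
    setIntegral_mono_on hfint hBint measurableSet_ball hptw
  rw [hBval] at hIle
  calc (π * r ^ 2)⁻¹ * (∫ ζ in ball z r, ‖f ζ - f z‖)
      ≤ (π * r ^ 2)⁻¹ * ((35/18) * C * (π * r ^ 2)) := by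
        apply mul_le_mul_of_nonneg_left hIle (by positivity)
    _ = (35/18) * C := by field_simp
    _ ≤ 2 * M * (r * ω (1/r)) := by rw [hC]; nlinarith [hC0, hω0, hM, hr]
end

section
/- Let ω be a majorant, M > 0, and let f be a harmonic mapping in the unit disk D such that for every z ∈ D and every r ∈ (0, 1−|z|], (1/|D(z,r)|) ∫_{D(z,r)} |f(ζ) − f(z)| dA(ζ) ≤ M r ω(1/r). Then Λ_f(z) ≤ 6 M ω(1/d(z)) for every z ∈ D. -/
open Complex MeasureTheory Metric Set Real
open scoped ENNReal

lemma clm_repr (L : ℂ →L[ℝ] ℂ) (v : ℂ) : L v = (v.re : ℂ) * L 1 + (v.im : ℂ) * L Complex.I := by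
  have hv : v = v.re • (1 : ℂ) + v.im • Complex.I := by
    simp [Complex.real_smul, Complex.re_add_im]
  calc L v = L (v.re • (1 : ℂ) + v.im • Complex.I) := by rw [← hv]
  _ = v.re • L 1 + v.im • L Complex.I := by
        rw [map_add, L.map_smul, L.map_smul]
  _ = (v.re : ℂ) * L 1 + (v.im : ℂ) * L Complex.I := by simp [Complex.real_smul]

lemma wirtinger_alg (a b v : ℂ) : (v.re:ℂ) * a + (v.im:ℂ) * b
    = v * ((a - Complex.I*b)/2) + (starRingEnd ℂ) v * ((a + Complex.I*b)/2) := by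
  have h1 : (starRingEnd ℂ) v = (v.re:ℂ) - (v.im:ℂ) * Complex.I := by simp [Complex.ext_iff]
  have h2 : v = (v.re:ℂ) + (v.im:ℂ) * Complex.I := (Complex.re_add_im v).symm
  generalize (v.re:ℂ) = x at h1 h2 ⊢
  generalize (v.im:ℂ) = y at h1 h2 ⊢
  rw [h1, h2]
  have hI := Complex.I_sq
  linear_combination y * b * hI

/-- Wirtinger representation of the real derivative. -/
lemma fderiv_eq_wirtinger (f : ℂ → ℂ) (z : ℂ) (v : ℂ) :
    fderiv ℝ f z v = v * wirtingerZ f z + (starRingEnd ℂ) v * wirtingerZbar f z := by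
  rw [clm_repr (fderiv ℝ f z) v, wirtingerZ, wirtingerZbar]
  exact wirtinger_alg _ _ _

lemma clm_complex_linear {L : ℂ →L[ℝ] ℂ} (h : L Complex.I = Complex.I * L 1) (v : ℂ) :
    L v = v * L 1 := by
  rw [clm_repr L v, h]
  have h2 : v = (v.re:ℂ) + (v.im:ℂ) * Complex.I := (Complex.re_add_im v).symm
  nth_rewrite 3 [h2]
  ring

lemma diffAt_of_CR {g : ℂ → ℂ} {L : ℂ →L[ℝ] ℂ} {z : ℂ} (hg : HasFDerivAt g L z)
    (h : L Complex.I = Complex.I * L 1) : DifferentiableAt ℂ g z := by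
  let Lc : ℂ →L[ℂ] ℂ := (L 1) • (ContinuousLinearMap.id ℂ ℂ)
  have hrs : Lc.restrictScalars ℝ = L := by
    apply ContinuousLinearMap.ext
    intro v
    simp only [ContinuousLinearMap.coe_restrictScalars', ContinuousLinearMap.smul_apply,
      ContinuousLinearMap.coe_id', id_eq, smul_eq_mul, Lc]
    rw [clm_complex_linear h v]; ring
  exact (hasFDerivAt_of_restrictScalars (𝕜 := ℝ) (f' := Lc) hg hrs).differentiableAt

/-- Both Wirtinger derivative fields of a harmonic function are holomorphic. -/
lemma holo (f : ℂ → ℂ) (hf : IsHarmonicOn f (ball (0:ℂ) 1)) {z : ℂ} (hz : z ∈ ball (0:ℂ) 1) :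
    DifferentiableAt ℂ (wirtingerZ f) z ∧
    DifferentiableAt ℂ (fun w => (starRingEnd ℂ) (wirtingerZbar f w)) z := by
  have hob : ball (0:ℂ) 1 ∈ nhds z := isOpen_ball.mem_nhds hz
  have hC2 := hf.1
  have hf'C1 : ContDiffOn ℝ 1 (fun w => fderiv ℝ f w) (ball (0:ℂ) 1) :=
    hC2.fderiv_of_isOpen isOpen_ball (by norm_num)
  have hf'diffAt : DifferentiableAt ℝ (fun w => fderiv ℝ f w) z :=
    ((hf'C1.differentiableOn (by norm_num)) z hz).differentiableAt hob
  set S := fderiv ℝ (fun w => fderiv ℝ f w) z with hSdef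
  have hS : HasFDerivAt (fun w => fderiv ℝ f w) S z := hf'diffAt.hasFDerivAt
  have hfd : ∀ᶠ y in nhds z, HasFDerivAt f (fderiv ℝ f y) y := by
    filter_upwards [hob] with y hy
    exact (((hC2.differentiableOn (by norm_num)) y hy).differentiableAt
      (isOpen_ball.mem_nhds hy)).hasFDerivAt
  have hsymm : ∀ v w, S v w = S w v := fun v w =>
    second_derivative_symmetric_of_eventually hfd hS v w
  have h1 : HasFDerivAt (fun w => fderiv ℝ f w 1)
      ((ContinuousLinearMap.apply ℝ ℂ (1:ℂ)).comp S) z :=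
    (ContinuousLinearMap.apply ℝ ℂ (1:ℂ)).hasFDerivAt.comp z hS
  have hI : HasFDerivAt (fun w => fderiv ℝ f w Complex.I)
      ((ContinuousLinearMap.apply ℝ ℂ (Complex.I)).comp S) z :=
    (ContinuousLinearMap.apply ℝ ℂ (Complex.I)).hasFDerivAt.comp z hS
  have hlap : S 1 1 + S Complex.I Complex.I = 0 := by
    have := hf.2 z hz
    rw [h1.fderiv, hI.fderiv] at this
    simpa using this
  have hval : ∀ (c : ℂ) (v : ℂ),
      ((2:ℂ)⁻¹ • (((ContinuousLinearMap.apply ℝ ℂ (1:ℂ)).comp S) +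
        c • ((ContinuousLinearMap.apply ℝ ℂ (Complex.I)).comp S))) v
        = (2:ℂ)⁻¹ * (S v 1 + c * S v Complex.I) := by
    intro c v
    simp [ContinuousLinearMap.smul_apply, ContinuousLinearMap.comp_apply,
      ContinuousLinearMap.apply_apply, smul_eq_mul]
    ring
  have hI2 : Complex.I ^ 2 = -1 := Complex.I_sq
  have e1 : S Complex.I 1 = S 1 Complex.I := hsymm _ _
  constructor
  · -- wirtingerZ is holomorphic
    have hmul : HasFDerivAt (fun w => Complex.I * fderiv ℝ f w Complex.I)
        (Complex.I • ((ContinuousLinearMap.apply ℝ ℂ (Complex.I)).comp S)) z :=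
      hI.const_mul Complex.I
    have hsub := (h1.sub hmul).const_mul ((2:ℂ)⁻¹)
    have hW : HasFDerivAt (wirtingerZ f)
        ((2:ℂ)⁻¹ • (((ContinuousLinearMap.apply ℝ ℂ (1:ℂ)).comp S) +
          (-Complex.I) • ((ContinuousLinearMap.apply ℝ ℂ (Complex.I)).comp S))) z := by
      have heq : wirtingerZ f = fun w =>
          (2:ℂ)⁻¹ * (fderiv ℝ f w 1 - Complex.I * fderiv ℝ f w Complex.I) := by
        funext w; rw [wirtingerZ, div_eq_inv_mul]
      rw [heq]
      refine hsub.congr_fderiv ?_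
      ext v
      simp [ContinuousLinearMap.smul_apply, ContinuousLinearMap.comp_apply,
        ContinuousLinearMap.apply_apply, smul_eq_mul, sub_eq_add_neg]
    apply diffAt_of_CR hW
    rw [hval, hval]
    linear_combination ((2:ℂ)⁻¹) * e1 - ((2:ℂ)⁻¹) * Complex.I * hlap
      + ((2:ℂ)⁻¹) * (S 1 Complex.I) * hI2
  · -- conj ∘ wirtingerZbar is holomorphic
    have hmul : HasFDerivAt (fun w => Complex.I * fderiv ℝ f w Complex.I)
        (Complex.I • ((ContinuousLinearMap.apply ℝ ℂ (Complex.I)).comp S)) z :=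
      hI.const_mul Complex.I
    have hadd := (h1.add hmul).const_mul ((2:ℂ)⁻¹)
    set C := (Complex.conjCLE : ℂ ≃L[ℝ] ℂ).toContinuousLinearMap with hC
    have hcomp := C.hasFDerivAt.comp z hadd
    have hK : HasFDerivAt (fun w => (starRingEnd ℂ) (wirtingerZbar f w))
        (C.comp ((2:ℂ)⁻¹ • (((ContinuousLinearMap.apply ℝ ℂ (1:ℂ)).comp S) +
          Complex.I • ((ContinuousLinearMap.apply ℝ ℂ (Complex.I)).comp S)))) z := by
      have heq : (fun w => (starRingEnd ℂ) (wirtingerZbar f w)) = (fun w =>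
          C ((2:ℂ)⁻¹ * (fderiv ℝ f w 1 + Complex.I * fderiv ℝ f w Complex.I))) := by
        funext w
        rw [wirtingerZbar, div_eq_inv_mul]
        simp [hC]
      rw [heq]
      exact hcomp
    apply diffAt_of_CR hK
    have hCval : ∀ x : ℂ, (C.comp ((2:ℂ)⁻¹ •
        (((ContinuousLinearMap.apply ℝ ℂ (1:ℂ)).comp S) +
          Complex.I • ((ContinuousLinearMap.apply ℝ ℂ (Complex.I)).comp S)))) x
        = (starRingEnd ℂ) ((2:ℂ)⁻¹ * (S x 1 + Complex.I * S x Complex.I)) := by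
      intro x
      rw [ContinuousLinearMap.comp_apply, hval]
      simp [hC]
    rw [hCval, hCval]
    have hconj : ∀ x:ℂ, Complex.I * (starRingEnd ℂ) x = (starRingEnd ℂ) (-Complex.I * x) := by
      intro x; rw [map_mul, map_neg, Complex.conj_I]; ring
    rw [hconj]
    congr 1
    linear_combination ((2:ℂ)⁻¹) * e1 + ((2:ℂ)⁻¹) * Complex.I * hlap
      + ((2:ℂ)⁻¹) * (S 1 Complex.I) * hI2

lemma intervalIntegral_conj {f : ℝ → ℂ} {a b : ℝ} :
    ∫ x in a..b, (starRingEnd ℂ) (f x) = (starRingEnd ℂ) (∫ x in a..b, f x) := by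
  simp [intervalIntegral, integral_conj, map_sub]

/-- Mean value property over circles, for holomorphic functions. -/
lemma cauchyMVP {g : ℂ → ℂ} {z : ℂ} {s : ℝ} (hs : 0 < s)
    (hcont : ContinuousOn g (closedBall z s))
    (hd : ∀ x ∈ ball z s, DifferentiableAt ℂ g x) :
    ∫ θ in (0:ℝ)..2*π, g (z + (s:ℂ) * Complex.exp (θ * Complex.I)) = (2*π:ℝ) • g z := by
  have h := Complex.two_pi_I_inv_smul_circleIntegral_sub_inv_smul_of_differentiable_on_off_countable
    (s := (∅ : Set ℂ)) countable_empty (mem_ball_self hs) hcont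
    (fun x hx => hd x hx.1)
  rw [circleIntegral] at h
  have key : ∀ θ ∈ uIcc (0:ℝ) (2*π),
      deriv (circleMap z s) θ • ((circleMap z s θ - z)⁻¹ • g (circleMap z s θ))
      = Complex.I * g (z + (s:ℂ) * Complex.exp (θ * Complex.I)) := by
    intro θ _
    have hne : (s:ℂ) * Complex.exp (θ * Complex.I) ≠ 0 :=
      mul_ne_zero (by exact_mod_cast hs.ne') (Complex.exp_ne_zero _)
    simp only [deriv_circleMap, circleMap, smul_eq_mul, zero_add, add_sub_cancel_left]
    field_simp
    exact mul_div_cancel_left₀ _ (by exact_mod_cast hs.ne')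
  rw [intervalIntegral.integral_congr key, intervalIntegral.integral_const_mul] at h
  have h2 : Complex.I * ∫ θ in (0:ℝ)..2*π, g (z + (s:ℂ) * Complex.exp (θ * Complex.I))
      = (2 * (π:ℂ) * Complex.I) * g z := by
    have hne : (2 * (π:ℂ) * Complex.I) ≠ 0 := by
      simp [Real.pi_ne_zero, Complex.I_ne_zero, Complex.ofReal_ne_zero]
    rw [smul_eq_mul, inv_mul_eq_iff_eq_mul₀ hne] at h
    rw [h]
  have h3 : Complex.I * (∫ θ in (0:ℝ)..2*π, g (z + (s:ℂ) * Complex.exp (θ * Complex.I)))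
      = Complex.I * ((2*(π:ℂ)) * g z) := by rw [h2]; ring
  have h4 := mul_left_cancel₀ Complex.I_ne_zero h3
  rw [h4, Complex.real_smul]
  push_cast; ring

/-- Vanishing first Fourier-type coefficient for holomorphic functions. -/
lemma cauchyVanish {g : ℂ → ℂ} {z : ℂ} {s : ℝ} (hs : 0 < s)
    (hcont : ContinuousOn g (closedBall z s))
    (hd : ∀ x ∈ ball z s, DifferentiableAt ℂ g x) :
    ∫ θ in (0:ℝ)..2*π, Complex.exp (2 * θ * Complex.I)
      * g (z + (s:ℂ) * Complex.exp (θ * Complex.I)) = 0 := by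
  have h := Complex.circleIntegral_eq_zero_of_differentiable_on_off_countable
    (R := s) (c := z) (f := fun w => (w - z) * g w) hs.le (s := (∅ : Set ℂ)) countable_empty
    ((continuousOn_id.sub continuousOn_const).mul hcont)
    (fun x hx => ((differentiableAt_id.sub_const z).mul (hd x hx.1)))
  rw [circleIntegral] at h
  have key : ∀ θ ∈ uIcc (0:ℝ) (2*π),
      deriv (circleMap z s) θ • ((circleMap z s θ - z) * g (circleMap z s θ))
      = (Complex.I * s^2) * (Complex.exp (2 * θ * Complex.I)
          * g (z + (s:ℂ) * Complex.exp (θ * Complex.I))) := by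
    intro θ _
    simp only [deriv_circleMap, circleMap, smul_eq_mul, zero_add, add_sub_cancel_left]
    rw [show (2:ℂ) * θ * Complex.I = θ*Complex.I + θ*Complex.I by ring, Complex.exp_add]
    ring
  rw [intervalIntegral.integral_congr key, intervalIntegral.integral_const_mul] at h
  have hne : (Complex.I * (s:ℂ)^2) ≠ 0 := by
    simp [Complex.I_ne_zero, hs.ne']
  exact (mul_eq_zero.mp h).resolve_left hne


section KeyDeriv

open intervalIntegral

lemma key_deriv (f : ℂ → ℂ) (hf : IsHarmonicOn f (ball (0:ℂ) 1)) (z : ℂ) (ρ s : ℝ)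
    (hρ : closedBall z ρ ⊆ ball (0:ℂ) 1) (hs : 0 < s) (hsρ : s < ρ)
    (w : ℝ → ℂ) (hw_cont : Continuous w) (hw_norm : ∀ θ : ℝ, ‖w θ‖ = 1) (V : ℂ)
    (hV : ∀ x : ℝ, x ∈ Icc 0 s →
      (∫ θ in (0:ℝ)..2*π, (fderiv ℝ f (z + (x:ℂ) * Complex.exp ((θ:ℂ) * Complex.I))
        (Complex.exp ((θ:ℂ) * Complex.I))) * w θ) = V) :
    (∫ θ in (0:ℝ)..2*π,
        (f (z + (s:ℂ) * Complex.exp ((θ:ℂ) * Complex.I)) - f z) * w θ) = s • V := by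
  have hεpos : 0 < ρ - s := by linarith
  have hecont : Continuous (fun θ : ℝ => Complex.exp ((θ:ℂ) * Complex.I)) :=
    Complex.continuous_exp.comp (Complex.continuous_ofReal.mul continuous_const)
  have henorm : ∀ θ : ℝ, ‖Complex.exp ((θ:ℂ) * Complex.I)‖ = 1 := fun θ => by
    simp [Complex.norm_exp]
  have hmemρ : ∀ x : ℝ, |x| ≤ ρ → ∀ θ : ℝ,
      z + (x:ℂ) * Complex.exp ((θ:ℂ) * Complex.I) ∈ closedBall z ρ := by
    intro x hx θ
    simp only [mem_closedBall, dist_eq_norm, add_sub_cancel_left]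
    rw [norm_mul, henorm, mul_one]
    simpa using hx
  have hmem : ∀ x : ℝ, |x| ≤ ρ → ∀ θ : ℝ,
      z + (x:ℂ) * Complex.exp ((θ:ℂ) * Complex.I) ∈ ball (0:ℂ) 1 := fun x hx θ =>
    hρ (hmemρ x hx θ)
  have hcontf : ContinuousOn f (ball (0:ℂ) 1) := hf.1.continuousOn
  have hfd_cont : ContinuousOn (fderiv ℝ f) (ball (0:ℂ) 1) :=
    hf.1.continuousOn_fderiv_of_isOpen isOpen_ball (by norm_num)
  obtain ⟨Cb, hCb⟩ := (isCompact_closedBall z ρ).exists_bound_of_continuousOn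
    (hfd_cont.mono hρ)
  have hdiffat : ∀ u ∈ ball (0:ℂ) 1, DifferentiableAt ℝ f u := fun u hu =>
    ((hf.1.differentiableOn (by norm_num)) u hu).differentiableAt (isOpen_ball.mem_nhds hu)
  have hpath : ∀ x : ℝ, Continuous (fun θ : ℝ => z + (x:ℂ) * Complex.exp ((θ:ℂ) * Complex.I)) :=
    fun x => continuous_const.add (continuous_const.mul hecont)
  -- continuity in θ of the integrand and of the candidate derivative
  have hcont_int : ∀ x : ℝ, |x| ≤ ρ → Continuous (fun θ : ℝ =>
      (f (z + (x:ℂ) * Complex.exp ((θ:ℂ) * Complex.I)) - f z) * w θ) := by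
    intro x hx
    exact ((hcontf.comp_continuous (hpath x) (fun θ => hmem x hx θ)).sub
      continuous_const).mul hw_cont
  have hcont_der : ∀ x : ℝ, |x| ≤ ρ → Continuous (fun θ : ℝ =>
      (fderiv ℝ f (z + (x:ℂ) * Complex.exp ((θ:ℂ) * Complex.I))
        (Complex.exp ((θ:ℂ) * Complex.I))) * w θ) := by
    intro x hx
    exact (((hfd_cont.comp_continuous (hpath x) (fun θ => hmem x hx θ)).clm_apply
      hecont)).mul hw_cont
  set A : ℝ → ℂ := fun x => ∫ θ in (0:ℝ)..2*π,
      (f (z + (x:ℂ) * Complex.exp ((θ:ℂ) * Complex.I)) - f z) * w θ with hA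
  have hderivA : ∀ x₀ ∈ Icc (0:ℝ) s, HasDerivAt A V x₀ := by
    intro x₀ hx₀
    have hxballρ : ∀ x ∈ ball x₀ (ρ - s), |x| ≤ ρ := by
      intro x hx
      rw [mem_ball, Real.dist_eq] at hx
      have h1 : |x₀| ≤ s := by rw [_root_.abs_of_nonneg hx₀.1]; exact hx₀.2
      have h2 := abs_sub_abs_le_abs_sub x x₀
      linarith [hx.le]
    have hx₀ρ : |x₀| ≤ ρ := by
      have : |x₀| ≤ s := by rw [_root_.abs_of_nonneg hx₀.1]; exact hx₀.2
      linarith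
    have key := intervalIntegral.hasDerivAt_integral_of_dominated_loc_of_deriv_le
      (𝕜 := ℝ) (F := fun x θ => (f (z + (x:ℂ) * Complex.exp ((θ:ℂ) * Complex.I)) - f z) * w θ)
      (F' := fun x θ => (fderiv ℝ f (z + (x:ℂ) * Complex.exp ((θ:ℂ) * Complex.I))
        (Complex.exp ((θ:ℂ) * Complex.I))) * w θ)
      (x₀ := x₀) (s := ball x₀ (ρ - s)) (a := 0) (b := 2*π) (μ := volume)
      (bound := fun _ => Cb) (ball_mem_nhds x₀ hεpos) ?_ ?_ ?_ ?_ ?_ ?_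
    · rw [hV x₀ hx₀] at key
      exact key.2
    · filter_upwards [ball_mem_nhds x₀ hεpos] with x hx
      exact (hcont_int x (hxballρ x hx)).aestronglyMeasurable
    · exact (hcont_int x₀ hx₀ρ).intervalIntegrable 0 (2*π)
    · exact (hcont_der x₀ hx₀ρ).aestronglyMeasurable
    · refine Filter.Eventually.of_forall (fun θ _ x hx => ?_)
      rw [norm_mul, hw_norm, mul_one]
      calc ‖fderiv ℝ f (z + (x:ℂ) * Complex.exp ((θ:ℂ) * Complex.I))
            (Complex.exp ((θ:ℂ) * Complex.I))‖
          ≤ ‖fderiv ℝ f (z + (x:ℂ) * Complex.exp ((θ:ℂ) * Complex.I))‖ *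
            ‖Complex.exp ((θ:ℂ) * Complex.I)‖ := ContinuousLinearMap.le_opNorm _ _
        _ ≤ Cb := by
            rw [henorm, mul_one]
            exact hCb _ (hmemρ x (hxballρ x hx) θ)
    · exact intervalIntegrable_const
    · refine Filter.Eventually.of_forall (fun θ _ x hx => ?_)
      have hin : HasDerivAt (fun x : ℝ => z + (x:ℂ) * Complex.exp ((θ:ℂ) * Complex.I))
          (Complex.exp ((θ:ℂ) * Complex.I)) x := by
        simpa using ((Complex.ofRealCLM.hasDerivAt (x := x)).mul_const
          (Complex.exp ((θ:ℂ) * Complex.I))).const_add z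
      have hfat : HasFDerivAt f
          (fderiv ℝ f (z + (x:ℂ) * Complex.exp ((θ:ℂ) * Complex.I)))
          (z + (x:ℂ) * Complex.exp ((θ:ℂ) * Complex.I)) :=
        (hdiffat _ (hmem x (hxballρ x hx) θ)).hasFDerivAt
      exact ((hfat.comp_hasDerivAt x hin).sub_const (f z)).mul_const (w θ)
  have hA0 : A 0 = 0 := by
    simp [hA]
  have hftc := intervalIntegral.integral_eq_sub_of_hasDerivAt
    (f := A) (f' := fun _ => V) (a := 0) (b := s)
    (fun x hx => hderivA x (by rwa [uIcc_of_le hs.le] at hx))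
    (intervalIntegrable_const)
  rw [intervalIntegral.integral_const, hA0, sub_zero, sub_zero] at hftc
  exact hftc.symm

end KeyDeriv

section CircleBound

open intervalIntegral

lemma intExpGen (c : ℂ) (hc : c ≠ 0) (h1 : Complex.exp (c * ((2*π:ℝ):ℂ)) = 1) :
    ∫ θ in (0:ℝ)..2*π, Complex.exp (c * (θ:ℂ)) = 0 := by
  rw [integral_exp_mul_complex hc]
  rw [Complex.ofReal_zero, mul_zero, Complex.exp_zero]
  rw [h1]
  simp

lemma intExpPos : ∫ θ in (0:ℝ)..2*π, Complex.exp (2*(θ:ℂ)*Complex.I) = 0 := by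
  have h := intExpGen (2*Complex.I) (by simp [Complex.I_ne_zero])
    (by
      have := Complex.exp_int_mul_two_pi_mul_I 2
      push_cast at this ⊢
      rw [← this]; ring_nf)
  rw [← h]
  apply integral_congr
  intro θ _
  ring_nf

lemma intExpNeg : ∫ θ in (0:ℝ)..2*π, Complex.exp (-(2*(θ:ℂ)*Complex.I)) = 0 := by
  have h := intExpGen (-(2*Complex.I)) (by simp [Complex.I_ne_zero])
    (by
      have := Complex.exp_int_mul_two_pi_mul_I (-2)
      push_cast at this ⊢
      rw [← this]; ring_nf)
  rw [← h]
  apply integral_congr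
  intro θ _
  ring_nf

lemma circle_bound (f : ℂ → ℂ) (hf : IsHarmonicOn f (ball (0:ℂ) 1)) (z : ℂ) (ρ s : ℝ)
    (hρ : closedBall z ρ ⊆ ball (0:ℂ) 1) (hs : 0 < s) (hsρ : s < ρ) :
    2*π*s*‖wirtingerZ f z‖
        ≤ (∫ θ in (0:ℝ)..2*π, ‖f (z + (s:ℂ)*Complex.exp ((θ:ℂ)*Complex.I)) - f z‖)
      ∧ 2*π*s*‖wirtingerZbar f z‖
        ≤ (∫ θ in (0:ℝ)..2*π, ‖f (z + (s:ℂ)*Complex.exp ((θ:ℂ)*Complex.I)) - f z‖) := by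
  have hρpos : 0 < ρ := hs.trans hsρ
  set K : ℂ → ℂ := fun u => (starRingEnd ℂ) (wirtingerZbar f u) with hK
  have hFdiff : ∀ u ∈ ball (0:ℂ) 1, DifferentiableAt ℂ (wirtingerZ f) u :=
    fun u hu => (holo f hf hu).1
  have hKdiff : ∀ u ∈ ball (0:ℂ) 1, DifferentiableAt ℂ K u :=
    fun u hu => (holo f hf hu).2
  have hFcont : ContinuousOn (wirtingerZ f) (ball (0:ℂ) 1) :=
    fun u hu => ((hFdiff u hu).continuousAt).continuousWithinAt
  have hKcont : ContinuousOn K (ball (0:ℂ) 1) :=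
    fun u hu => ((hKdiff u hu).continuousAt).continuousWithinAt
  have hGeq : (fun u => (starRingEnd ℂ) (K u)) = wirtingerZbar f := by
    funext u; simp [hK]
  have hGcont : ContinuousOn (wirtingerZbar f) (ball (0:ℂ) 1) := by
    rw [← hGeq]
    exact Complex.continuous_conj.comp_continuousOn hKcont
  have hecont : Continuous (fun θ : ℝ => Complex.exp ((θ:ℂ) * Complex.I)) :=
    Complex.continuous_exp.comp (Complex.continuous_ofReal.mul continuous_const)
  have henorm : ∀ θ : ℝ, ‖Complex.exp ((θ:ℂ) * Complex.I)‖ = 1 := fun θ => by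
    simp [Complex.norm_exp]
  have hconje : ∀ θ : ℝ, (starRingEnd ℂ) (Complex.exp ((θ:ℂ) * Complex.I))
      = Complex.exp (-((θ:ℂ) * Complex.I)) := by
    intro θ
    rw [← Complex.exp_conj, map_mul, Complex.conj_ofReal, Complex.conj_I]
    ring_nf
  have hconje2 : ∀ θ : ℝ, (starRingEnd ℂ) (Complex.exp (2*(θ:ℂ) * Complex.I))
      = Complex.exp (-(2*(θ:ℂ) * Complex.I)) := by
    intro θ
    rw [← Complex.exp_conj]
    congr 1
    simp only [map_mul, Complex.conj_I, Complex.conj_ofReal, map_ofNat]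
    ring
  have hxsub : ∀ x : ℝ, 0 < x → x ≤ s → closedBall z x ⊆ ball (0:ℂ) 1 :=
    fun x _ hx => (closedBall_subset_closedBall (by linarith)).trans hρ
  have hmem : ∀ (x : ℝ), 0 ≤ x → x ≤ s → ∀ θ : ℝ,
      z + (x:ℂ) * Complex.exp ((θ:ℂ) * Complex.I) ∈ ball (0:ℂ) 1 := by
    intro x hx0 hxs θ
    apply hρ
    simp only [mem_closedBall, dist_eq_norm, add_sub_cancel_left]
    rw [norm_mul, henorm, mul_one]
    rw [Complex.norm_real, Real.norm_eq_abs, _root_.abs_of_nonneg hx0]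
    linarith
  -- generic norm step
  have hnorm_side : ∀ (w : ℝ → ℂ), (∀ θ : ℝ, ‖w θ‖ = 1) → ∀ (V : ℂ),
      ((∫ θ in (0:ℝ)..2*π,
        (f (z + (s:ℂ) * Complex.exp ((θ:ℂ) * Complex.I)) - f z) * w θ) = s • V) →
      s * ‖V‖ ≤ ∫ θ in (0:ℝ)..2*π,
        ‖f (z + (s:ℂ)*Complex.exp ((θ:ℂ)*Complex.I)) - f z‖ := by
    intro w hwn V hEq
    have h1 := intervalIntegral.norm_integral_le_integral_norm
      (f := fun θ : ℝ => (f (z + (s:ℂ) * Complex.exp ((θ:ℂ) * Complex.I)) - f z) * w θ)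
      (a := 0) (b := 2*π) (μ := volume) (by positivity)
    rw [hEq] at h1
    have h2 : ‖s • V‖ = s * ‖V‖ := by
      rw [norm_smul, Real.norm_eq_abs, _root_.abs_of_nonneg hs.le]
    rw [h2] at h1
    refine h1.trans (le_of_eq (integral_congr fun θ _ => ?_))
    rw [norm_mul, hwn, mul_one]
  constructor
  · -- bound for wirtingerZ
    have hV : ∀ x : ℝ, x ∈ Icc 0 s →
        (∫ θ in (0:ℝ)..2*π, (fderiv ℝ f (z + (x:ℂ) * Complex.exp ((θ:ℂ) * Complex.I))
          (Complex.exp ((θ:ℂ) * Complex.I))) * Complex.exp (-((θ:ℂ) * Complex.I)))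
          = (2*π:ℝ) • wirtingerZ f z := by
      intro x hx
      have hexpand : ∀ θ : ℝ,
          (fderiv ℝ f (z + (x:ℂ) * Complex.exp ((θ:ℂ) * Complex.I))
            (Complex.exp ((θ:ℂ) * Complex.I))) * Complex.exp (-((θ:ℂ) * Complex.I))
          = wirtingerZ f (z + (x:ℂ) * Complex.exp ((θ:ℂ) * Complex.I))
            + Complex.exp (-(2*(θ:ℂ) * Complex.I))
              * wirtingerZbar f (z + (x:ℂ) * Complex.exp ((θ:ℂ) * Complex.I)) := by
        intro θ
        rw [fderiv_eq_wirtinger, hconje]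
        have h1 : Complex.exp ((θ:ℂ)*Complex.I) * Complex.exp (-((θ:ℂ)*Complex.I)) = 1 := by
          rw [← Complex.exp_add]; ring_nf; exact Complex.exp_zero
        have h2 : Complex.exp (-((θ:ℂ)*Complex.I)) * Complex.exp (-((θ:ℂ)*Complex.I))
            = Complex.exp (-(2*(θ:ℂ)*Complex.I)) := by
          rw [← Complex.exp_add]; ring_nf
        linear_combination (wirtingerZ f (z + (x:ℂ) * Complex.exp ((θ:ℂ) * Complex.I))) * h1
          + (wirtingerZbar f (z + (x:ℂ) * Complex.exp ((θ:ℂ) * Complex.I))) * h2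
      rw [integral_congr (fun θ _ => hexpand θ)]
      have hpath : Continuous (fun θ : ℝ => z + (x:ℂ) * Complex.exp ((θ:ℂ) * Complex.I)) :=
        continuous_const.add (continuous_const.mul hecont)
      have hintF : IntervalIntegrable (fun θ : ℝ =>
          wirtingerZ f (z + (x:ℂ) * Complex.exp ((θ:ℂ) * Complex.I))) volume 0 (2*π) :=
        ((hFcont.comp_continuous hpath (fun θ => hmem x hx.1 hx.2 θ))).intervalIntegrable 0 (2*π)
      have hintG : IntervalIntegrable (fun θ : ℝ =>
          Complex.exp (-(2*(θ:ℂ) * Complex.I))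
            * wirtingerZbar f (z + (x:ℂ) * Complex.exp ((θ:ℂ) * Complex.I))) volume 0 (2*π) := by
        apply Continuous.intervalIntegrable
        exact (Complex.continuous_exp.comp
            (((continuous_const.mul Complex.continuous_ofReal).mul continuous_const).neg)).mul
          (hGcont.comp_continuous hpath (fun θ => hmem x hx.1 hx.2 θ))
      rw [integral_add hintF hintG]
      have termG : (∫ θ in (0:ℝ)..2*π, Complex.exp (-(2*(θ:ℂ) * Complex.I))
          * wirtingerZbar f (z + (x:ℂ) * Complex.exp ((θ:ℂ) * Complex.I))) = 0 := by
        have hc : ∀ θ : ℝ, Complex.exp (-(2*(θ:ℂ) * Complex.I))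
            * wirtingerZbar f (z + (x:ℂ) * Complex.exp ((θ:ℂ) * Complex.I))
            = (starRingEnd ℂ) (Complex.exp (2*(θ:ℂ) * Complex.I)
              * K (z + (x:ℂ) * Complex.exp ((θ:ℂ) * Complex.I))) := by
          intro θ
          rw [map_mul, hconje2]
          simp [hK]
        rw [integral_congr (fun θ _ => hc θ), _root_.intervalIntegral_conj]
        rcases hx.1.eq_or_lt with heq | hpos
        · subst heq
          have : (∫ θ in (0:ℝ)..2*π, Complex.exp (2*(θ:ℂ) * Complex.I)
              * K (z + ((0:ℝ):ℂ) * Complex.exp ((θ:ℂ) * Complex.I)))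
              = (∫ θ in (0:ℝ)..2*π, Complex.exp (2*(θ:ℂ) * Complex.I)) * K z := by
            rw [← intervalIntegral.integral_mul_const]
            apply integral_congr
            intro θ _
            norm_num
          rw [this, intExpPos, zero_mul, map_zero]
        · rw [cauchyVanish hpos (hKcont.mono (hxsub x hpos hx.2))
            (fun u hu => hKdiff u ((ball_subset_closedBall.trans (hxsub x hpos hx.2)) hu)),
            map_zero]
      rw [termG, add_zero]
      rcases hx.1.eq_or_lt with heq | hpos
      · subst heq
        have : (∫ θ in (0:ℝ)..2*π,
            wirtingerZ f (z + ((0:ℝ):ℂ) * Complex.exp ((θ:ℂ) * Complex.I)))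
            = ∫ θ in (0:ℝ)..2*π, (fun _ : ℝ => wirtingerZ f z) θ := by
          apply integral_congr; intro θ _; norm_num
        rw [this, intervalIntegral.integral_const]
        rw [sub_zero]
      · exact cauchyMVP hpos (hFcont.mono (hxsub x hpos hx.2))
          (fun u hu => hFdiff u ((ball_subset_closedBall.trans (hxsub x hpos hx.2)) hu))
    have hkey := key_deriv f hf z ρ s hρ hs hsρ
      (fun θ : ℝ => Complex.exp (-((θ:ℂ) * Complex.I)))
      (Complex.continuous_exp.comp ((Complex.continuous_ofReal.mul continuous_const).neg))
      (fun θ => by simp [Complex.norm_exp])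
      ((2*π:ℝ) • wirtingerZ f z) hV
    have := hnorm_side _ (fun θ => by simp [Complex.norm_exp])
      _ hkey
    rw [norm_smul, Real.norm_eq_abs, _root_.abs_of_nonneg Real.two_pi_pos.le] at this
    linarith [this]
  · -- bound for wirtingerZbar
    have hV : ∀ x : ℝ, x ∈ Icc 0 s →
        (∫ θ in (0:ℝ)..2*π, (fderiv ℝ f (z + (x:ℂ) * Complex.exp ((θ:ℂ) * Complex.I))
          (Complex.exp ((θ:ℂ) * Complex.I))) * Complex.exp ((θ:ℂ) * Complex.I))
          = (2*π:ℝ) • wirtingerZbar f z := by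
      intro x hx
      have hexpand : ∀ θ : ℝ,
          (fderiv ℝ f (z + (x:ℂ) * Complex.exp ((θ:ℂ) * Complex.I))
            (Complex.exp ((θ:ℂ) * Complex.I))) * Complex.exp ((θ:ℂ) * Complex.I)
          = Complex.exp (2*(θ:ℂ) * Complex.I)
              * wirtingerZ f (z + (x:ℂ) * Complex.exp ((θ:ℂ) * Complex.I))
            + wirtingerZbar f (z + (x:ℂ) * Complex.exp ((θ:ℂ) * Complex.I)) := by
        intro θ
        rw [fderiv_eq_wirtinger, hconje]
        have h1 : Complex.exp ((θ:ℂ)*Complex.I) * Complex.exp ((θ:ℂ)*Complex.I)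
            = Complex.exp (2*(θ:ℂ)*Complex.I) := by
          rw [← Complex.exp_add]; ring_nf
        have h2 : Complex.exp (-((θ:ℂ)*Complex.I)) * Complex.exp ((θ:ℂ)*Complex.I) = 1 := by
          rw [← Complex.exp_add]; ring_nf; exact Complex.exp_zero
        linear_combination (wirtingerZ f (z + (x:ℂ) * Complex.exp ((θ:ℂ) * Complex.I))) * h1
          + (wirtingerZbar f (z + (x:ℂ) * Complex.exp ((θ:ℂ) * Complex.I))) * h2
      rw [integral_congr (fun θ _ => hexpand θ)]
      have hpath : Continuous (fun θ : ℝ => z + (x:ℂ) * Complex.exp ((θ:ℂ) * Complex.I)) :=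
        continuous_const.add (continuous_const.mul hecont)
      have hintF : IntervalIntegrable (fun θ : ℝ =>
          Complex.exp (2*(θ:ℂ) * Complex.I)
            * wirtingerZ f (z + (x:ℂ) * Complex.exp ((θ:ℂ) * Complex.I))) volume 0 (2*π) := by
        apply Continuous.intervalIntegrable
        exact (Complex.continuous_exp.comp
            ((continuous_const.mul Complex.continuous_ofReal).mul continuous_const)).mul
          (hFcont.comp_continuous hpath (fun θ => hmem x hx.1 hx.2 θ))
      have hintG : IntervalIntegrable (fun θ : ℝ =>
          wirtingerZbar f (z + (x:ℂ) * Complex.exp ((θ:ℂ) * Complex.I))) volume 0 (2*π) :=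
        ((hGcont.comp_continuous hpath (fun θ => hmem x hx.1 hx.2 θ))).intervalIntegrable 0 (2*π)
      rw [integral_add hintF hintG]
      have termF : (∫ θ in (0:ℝ)..2*π, Complex.exp (2*(θ:ℂ) * Complex.I)
          * wirtingerZ f (z + (x:ℂ) * Complex.exp ((θ:ℂ) * Complex.I))) = 0 := by
        rcases hx.1.eq_or_lt with heq | hpos
        · subst heq
          have : (∫ θ in (0:ℝ)..2*π, Complex.exp (2*(θ:ℂ) * Complex.I)
              * wirtingerZ f (z + ((0:ℝ):ℂ) * Complex.exp ((θ:ℂ) * Complex.I)))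
              = (∫ θ in (0:ℝ)..2*π, Complex.exp (2*(θ:ℂ) * Complex.I)) * wirtingerZ f z := by
            rw [← intervalIntegral.integral_mul_const]
            apply integral_congr
            intro θ _
            norm_num
          rw [this, intExpPos, zero_mul]
        · exact cauchyVanish hpos (hFcont.mono (hxsub x hpos hx.2))
            (fun u hu => hFdiff u ((ball_subset_closedBall.trans (hxsub x hpos hx.2)) hu))
      rw [termF, zero_add]
      have hcG : ∀ θ : ℝ, wirtingerZbar f (z + (x:ℂ) * Complex.exp ((θ:ℂ) * Complex.I))
          = (starRingEnd ℂ) (K (z + (x:ℂ) * Complex.exp ((θ:ℂ) * Complex.I))) := by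
        intro θ; simp [hK]
      rw [integral_congr (fun θ _ => hcG θ), _root_.intervalIntegral_conj]
      have termK : (∫ θ in (0:ℝ)..2*π,
          K (z + (x:ℂ) * Complex.exp ((θ:ℂ) * Complex.I))) = (2*π:ℝ) • K z := by
        rcases hx.1.eq_or_lt with heq | hpos
        · subst heq
          have : (∫ θ in (0:ℝ)..2*π, K (z + ((0:ℝ):ℂ) * Complex.exp ((θ:ℂ) * Complex.I)))
              = ∫ θ in (0:ℝ)..2*π, (fun _ : ℝ => K z) θ := by
            apply integral_congr; intro θ _; norm_num
          rw [this, intervalIntegral.integral_const, sub_zero]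
        · exact cauchyMVP hpos (hKcont.mono (hxsub x hpos hx.2))
            (fun u hu => hKdiff u ((ball_subset_closedBall.trans (hxsub x hpos hx.2)) hu))
      rw [termK]
      rw [Complex.real_smul, map_mul, Complex.conj_ofReal]
      simp [hK, Complex.real_smul]
    have hkey := key_deriv f hf z ρ s hρ hs hsρ
      (fun θ : ℝ => Complex.exp ((θ:ℂ) * Complex.I)) hecont henorm
      ((2*π:ℝ) • wirtingerZbar f z) hV
    have := hnorm_side _ henorm _ hkey
    rw [norm_smul, Real.norm_eq_abs, _root_.abs_of_nonneg Real.two_pi_pos.le] at this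
    linarith [this]

end CircleBound

section AreaBound

open intervalIntegral

lemma area_bound (f : ℂ → ℂ) (hf : IsHarmonicOn f (ball (0:ℂ) 1)) (z : ℂ) (t ρ : ℝ)
    (ht : 0 < t) (htρ : t < ρ) (hρ : closedBall z ρ ⊆ ball (0:ℂ) 1) :
    π * t^3 / 3 * (‖wirtingerZ f z‖ + ‖wirtingerZbar f z‖)
      ≤ ∫ ζ in ball z t, ‖f ζ - f z‖ := by
  set Λ : ℝ := ‖wirtingerZ f z‖ + ‖wirtingerZbar f z‖ with hΛ
  have hΛ0 : 0 ≤ Λ := by positivity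
  set C : ℝ → ℝ := fun s => ∫ θ in (0:ℝ)..2*π,
      ‖f (z + (s:ℂ)*Complex.exp ((θ:ℂ)*Complex.I)) - f z‖ with hCdef
  have hC : ∀ s : ℝ, 0 < s → s ≤ t → π * s * Λ ≤ C s := by
    intro s hs hst
    obtain ⟨h1, h2⟩ := circle_bound f hf z ρ s hρ hs (lt_of_le_of_lt hst htρ)
    rw [hΛ]
    rw [hCdef]
    simp only []
    nlinarith [h1, h2]
  -- translation to a ball centred at the origin
  have htrans : (∫ ζ in ball z t, ‖f ζ - f z‖)
      = ∫ w in ball (0:ℂ) t, ‖f (z + w) - f z‖ := by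
    have hmp : MeasurePreserving (fun w : ℂ => z + w) volume volume :=
      measurePreserving_add_left volume z
    have hemb : MeasurableEmbedding (fun w : ℂ => z + w) :=
      (MeasurableEquiv.addLeft z).measurableEmbedding
    have hpre : (fun w : ℂ => z + w) ⁻¹' (ball z t) = ball (0:ℂ) t := by
      ext w
      simp [mem_ball, dist_eq_norm, add_sub_cancel_left]
    rw [← hmp.setIntegral_preimage_emb hemb (fun ζ => ‖f ζ - f z‖) (ball z t), hpre]
  rw [htrans]
  -- polar coordinates
  set g : ℂ → ℝ := fun w => ‖f (z + w) - f z‖ with hg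
  set H : ℝ × ℝ → ℝ := fun p => p.1 * g ((p.1:ℂ) * Complex.exp ((p.2:ℂ) * Complex.I)) with hH
  set S : Set (ℝ × ℝ) := Ioo (0:ℝ) t ×ˢ Ioo (-π) π with hS
  have hsymm_eq : ∀ p : ℝ × ℝ, Complex.polarCoord.symm p
      = (p.1:ℂ) * Complex.exp ((p.2:ℂ) * Complex.I) := by
    intro p
    rw [Complex.polarCoord_symm_apply, Complex.exp_mul_I]
    push_cast
    ring
  have htarget : polarCoord.target = Ioi (0:ℝ) ×ˢ Ioo (-π) π := rfl
  have hpolar := Complex.integral_comp_polarCoord_symm ((ball (0:ℂ) t).indicator g)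
  rw [MeasureTheory.integral_indicator measurableSet_ball] at hpolar
  have hstep : (∫ p in polarCoord.target,
      p.1 • (ball (0:ℂ) t).indicator g (Complex.polarCoord.symm p)) = ∫ p in S, H p := by
    have hcongr : EqOn (fun p : ℝ × ℝ =>
        p.1 • (ball (0:ℂ) t).indicator g (Complex.polarCoord.symm p))
        (S.indicator H) polarCoord.target := by
      intro p hp
      rw [htarget] at hp
      obtain ⟨hp1, hp2⟩ := hp
      show p.1 • (ball (0:ℂ) t).indicator g (Complex.polarCoord.symm p) = S.indicator H p
      have habs : Complex.polarCoord.symm p ∈ ball (0:ℂ) t ↔ p.1 < t := by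
        rw [mem_ball_zero_iff, Complex.norm_polarCoord_symm,
          _root_.abs_of_pos hp1]
      by_cases hlt : p.1 < t
      · rw [indicator_of_mem (habs.mpr hlt), indicator_of_mem
          (by exact ⟨⟨hp1, hlt⟩, hp2⟩), hH]
        simp [hsymm_eq p, smul_eq_mul]
      · rw [indicator_of_notMem (fun hmem => hlt (habs.mp hmem)), indicator_of_notMem
          (by intro hmem; exact hlt hmem.1.2)]
        simp
    rw [setIntegral_congr_fun polarCoord.open_target.measurableSet hcongr,
      setIntegral_indicator (by measurability), htarget,
      inter_eq_self_of_subset_right (prod_mono (Ioo_subset_Ioi_self) (subset_refl _))]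
  rw [← hpolar, hstep]
  -- integrability of H on S
  have hKcompact : IsCompact (Icc (0:ℝ) t ×ˢ Icc (-π) π) := isCompact_Icc.prod isCompact_Icc
  have hmapsto : ∀ p : ℝ × ℝ, p ∈ Icc (0:ℝ) t ×ˢ Icc (-π) π →
      z + (p.1:ℂ) * Complex.exp ((p.2:ℂ) * Complex.I) ∈ ball (0:ℂ) 1 := by
    intro p hp
    apply hρ
    simp only [mem_closedBall, dist_eq_norm, add_sub_cancel_left]
    rw [norm_mul]
    have : ‖Complex.exp ((p.2:ℂ) * Complex.I)‖ = 1 := by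
      simp [Complex.norm_exp]
    rw [this, mul_one, Complex.norm_real, Real.norm_eq_abs,
      _root_.abs_of_nonneg hp.1.1]
    exact le_trans hp.1.2 htρ.le
  have hHcont : ContinuousOn H (Icc (0:ℝ) t ×ˢ Icc (-π) π) := by
    have hpathc : Continuous (fun p : ℝ × ℝ =>
        z + (p.1:ℂ) * Complex.exp ((p.2:ℂ) * Complex.I)) := by
      apply continuous_const.add
      exact (Complex.continuous_ofReal.comp continuous_fst).mul
        (Complex.continuous_exp.comp
          ((Complex.continuous_ofReal.comp continuous_snd).mul continuous_const))
    have hfc : ContinuousOn (fun p : ℝ × ℝ =>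
        ‖f (z + (p.1:ℂ) * Complex.exp ((p.2:ℂ) * Complex.I)) - f z‖)
        (Icc (0:ℝ) t ×ˢ Icc (-π) π) := by
      apply ContinuousOn.norm
      apply ContinuousOn.sub _ continuousOn_const
      exact hf.1.continuousOn.comp hpathc.continuousOn (fun p hp => hmapsto p hp)
    exact (continuous_fst.continuousOn).mul hfc
  have hHint : IntegrableOn H S := by
    apply (hHcont.integrableOn_compact hKcompact).mono_set
    rw [hS]
    exact prod_mono Ioo_subset_Icc_self Ioo_subset_Icc_self
  -- Fubini
  have hvol : (volume : Measure (ℝ × ℝ)) = (volume : Measure ℝ).prod volume :=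
    Measure.volume_eq_prod ℝ ℝ
  have hHint' : IntegrableOn H S ((volume : Measure ℝ).prod volume) := by
    rwa [← hvol]
  have hfub : ∫ p in S, H p = ∫ x in Ioo (0:ℝ) t, ∫ y in Ioo (-π) π, H (x, y) := by
    rw [hS] at hHint' ⊢
    rw [show (volume : Measure (ℝ × ℝ)) = (volume : Measure ℝ).prod volume from hvol]
    exact setIntegral_prod H hHint'
  rw [hfub]
  -- integrability of the inner integral as a function of the radius
  have hinner_int : IntegrableOn (fun x => ∫ y in Ioo (-π) π, H (x, y)) (Ioo (0:ℝ) t) := by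
    rw [hS] at hHint'
    have h2 : Integrable H (((volume : Measure ℝ).restrict (Ioo (0:ℝ) t)).prod
        ((volume : Measure ℝ).restrict (Ioo (-π) π))) := by
      rw [Measure.prod_restrict]; exact hHint'
    exact h2.integral_prod_left
  -- inner integral identity
  have hinner : ∀ x : ℝ, x ∈ Ioo (0:ℝ) t → (∫ y in Ioo (-π) π, H (x, y)) = x * C x := by
    intro x hx
    have hxpos : 0 < x := hx.1
    have hmul : (∫ y in Ioo (-π) π, H (x, y))
        = x * ∫ y in Ioo (-π) π, g ((x:ℂ) * Complex.exp ((y:ℂ) * Complex.I)) := by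
      rw [hH]
      exact integral_const_mul x _
    rw [hmul]
    congr 1
    -- convert Ioo integral to interval integral and shift by periodicity
    have hIoo : (∫ y in Ioo (-π) π, g ((x:ℂ) * Complex.exp ((y:ℂ) * Complex.I)))
        = ∫ y in (-π)..π, g ((x:ℂ) * Complex.exp ((y:ℂ) * Complex.I)) := by
      rw [intervalIntegral.integral_of_le (by linarith [Real.pi_pos]),
        integral_Ioc_eq_integral_Ioo]
    rw [hIoo]
    have hper : Function.Periodic
        (fun y : ℝ => g ((x:ℂ) * Complex.exp ((y:ℂ) * Complex.I))) (2*π) := by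
      intro y
      have : Complex.exp (((y + 2*π :ℝ):ℂ) * Complex.I)
          = Complex.exp ((y:ℂ) * Complex.I) := by
        push_cast
        rw [add_mul, Complex.exp_add, Complex.exp_two_pi_mul_I, mul_one]
      simp only [this]
    have := hper.intervalIntegral_add_eq (-π) 0
    rw [show -π + 2*π = π by ring, show (0:ℝ) + 2*π = 2*π by ring] at this
    rw [this, hCdef]
  -- compare with the lower bound
  have hlow : ∀ x : ℝ, x ∈ Ioo (0:ℝ) t → π * x^2 * Λ ≤ ∫ y in Ioo (-π) π, H (x, y) := by
    intro x hx
    rw [hinner x hx]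
    have := hC x hx.1 hx.2.le
    nlinarith [hx.1]
  have hmono := setIntegral_mono_on (μ := volume)
    (f := fun x : ℝ => π * x^2 * Λ) (g := fun x => ∫ y in Ioo (-π) π, H (x, y))
    ((((continuous_const.mul (continuous_pow 2)).mul
        continuous_const).integrableOn_Icc).mono_set Ioo_subset_Icc_self)
    hinner_int measurableSet_Ioo hlow
  refine le_trans (le_of_eq ?_) hmono
  rw [← integral_Ioc_eq_integral_Ioo, ← intervalIntegral.integral_of_le ht.le]
  rw [show (fun x : ℝ => π * x^2 * Λ) = fun x : ℝ => (π * Λ) * x^2 by funext x; ring]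
  rw [intervalIntegral.integral_const_mul, integral_pow]
  push_cast
  ring

end AreaBound

/-- if `ω` is a majorant, `M > 0`, and `f` is harmonic in the unit
disk such that `(1/(πr²)) ∫_{D(z,r)} |f(ζ) - f(z)| dA(ζ) ≤ M r ω(1/r)` for every
`z ∈ 𝔻` and `r ∈ (0, 1-|z|]`, then `Λ_f(z) ≤ 6 M ω(1/d(z))` on `𝔻`. -/
theorem stmt2 (ω : ℝ → ℝ) (hω : IsMajorant ω) (M : ℝ) (hM : 0 < M) (f : ℂ → ℂ)
    (hf : IsHarmonicOn f (ball (0 : ℂ) 1))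
    (hInt : ∀ z ∈ ball (0 : ℂ) 1, ∀ r : ℝ, 0 < r → r ≤ 1 - ‖z‖ →
      (π * r ^ 2)⁻¹ * (∫ ζ in ball z r, ‖f ζ - f z‖) ≤ M * (r * ω (1 / r))) :
    ∀ z ∈ ball (0 : ℂ) 1, Lam f z ≤ 6 * M * ω (1 / (1 - ‖z‖)) := by
  intro z hz
  have hz1 : ‖z‖ < 1 := by rwa [mem_ball, dist_zero_right] at hz
  set r : ℝ := 1 - ‖z‖ with hr
  have hrpos : 0 < r := by rw [hr]; linarith
  set t : ℝ := r/2 with htdef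
  set ρ : ℝ := 3/4*r with hρdef
  have ht : 0 < t := by rw [htdef]; positivity
  have htρ : t < ρ := by rw [htdef, hρdef]; linarith
  have hρsub : closedBall z ρ ⊆ ball (0:ℂ) 1 := by
    intro w hw
    rw [mem_closedBall, dist_eq_norm] at hw
    rw [mem_ball, dist_zero_right]
    have h1 : ‖w‖ ≤ ‖z‖ + ‖w - z‖ := by
      calc ‖w‖ = ‖z + (w - z)‖ := by ring_nf
      _ ≤ ‖z‖ + ‖w - z‖ := norm_add_le _ _
    have : ρ = 3/4*r := hρdef
    have hrw : ‖z‖ = 1 - r := by rw [hr]; ring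
    rw [hrw] at h1
    linarith
  have harea := area_bound f hf z t ρ ht htρ hρsub
  have hint := hInt z hz t ht (by rw [htdef, ← hr]; linarith)
  have hπt : (0:ℝ) < π * t^2 := by positivity
  have hIle : (∫ ζ in ball z t, ‖f ζ - f z‖) ≤ π * t^2 * (M * (t * ω (1/t))) := by
    have h0 := mul_le_mul_of_nonneg_left hint hπt.le
    calc (∫ ζ in ball z t, ‖f ζ - f z‖)
        = (π * t^2) * ((π * t^2)⁻¹ * (∫ ζ in ball z t, ‖f ζ - f z‖)) := by
          field_simp
      _ ≤ (π * t^2) * (M * (t * ω (1/t))) := h0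
  have hpt3 : (0:ℝ) < π * t^3 := by positivity
  have hΛle : Lam f z ≤ 3 * M * ω (1/t) := by
    have h1 : π * t^3/3 * (Lam f z) ≤ π * t^2 * (M * (t * ω (1/t))) := by
      rw [Lam]
      exact le_trans harea hIle
    have h2 : (π * t^3) * (Lam f z / 3) ≤ (π * t^3) * (M * ω (1/t)) := by
      have e1 : (π*t^3) * (Lam f z/3) = π*t^3/3*(Lam f z) := by ring
      have e2 : (π*t^3) * (M*ω (1/t)) = π*t^2*(M*(t*ω (1/t))) := by ring
      rw [e1, e2]; exact h1
    have h3 := le_of_mul_le_mul_left h2 hpt3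
    linarith
  have h1t : (1:ℝ)/t = 2/r := by
    rw [htdef]
    field_simp
  rw [h1t] at hΛle
  have hmaj := hω.2.2.2 (1/r) (2/r) (by positivity)
    ((div_le_div_iff_of_pos_right hrpos).mpr one_le_two)
  rw [div_le_div_iff₀ (by positivity) (by positivity)] at hmaj
  have hω2 : ω (2/r) ≤ 2 * ω (1/r) := by
    have h5 := mul_le_mul_of_nonneg_right hmaj hrpos.le
    have e3 : ω (2/r) * (1/r) * r = ω (2/r) := by field_simp
    have e4 : ω (1/r) * (2/r) * r = 2 * ω (1/r) := by field_simp
    rw [e3, e4] at h5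
    exact h5
  calc Lam f z ≤ 3 * M * ω (2/r) := hΛle
  _ ≤ 3 * M * (2 * ω (1/r)) := by
      apply mul_le_mul_of_nonneg_left hω2 (by positivity)
  _ = 6 * M * ω (1/r) := by ring
end
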